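/- arXiv:1909.03239 — 7 statements merged into one kernel-verified Lean document; each statement's English description precedes it below -/
import Mathlib

section
/- Consider the system of difference equations G = 0 over ℚ in unknowns X, Y₁,…,Y₆ given by G = {X·Y₁, Y₂ − Y₃² − Y₄² − Y₅² − Y₆², σ(Y₂) − Y₂ + 1 − Y₁}. For every subfield k of ℝ, in any solution of G = 0 in k^ℕ, the sequence (x_i)_{i∈ℕ} corresponding to X contains infinitely many zeroes. -/
/-- For any subfield `k` of `ℝ`, in any solution of the difference system
`G = {XY₁, Y₂ − Y₃² − Y₄² − Y₅² − Y₆², σ(Y₂) − Y₂ + 1 − Y₁}` in `k^ℕ`,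
the `X`-sequence contains infinitely many zeroes. -/
theorem stmt6 (k : Subfield ℝ) (x y₁ y₂ y₃ y₄ y₅ y₆ : ℕ → k)
    (h1 : ∀ i, x i * y₁ i = 0)
    (h2 : ∀ i, y₂ i - y₃ i ^ 2 - y₄ i ^ 2 - y₅ i ^ 2 - y₆ i ^ 2 = 0)
    (h3 : ∀ i, y₂ (i + 1) - y₂ i + 1 - y₁ i = 0) :
    {i : ℕ | x i = 0}.Infinite := by
  -- y₂ is nonnegative as a real number
  have hnn : ∀ i, (0 : ℝ) ≤ (y₂ i : ℝ) := by
    intro i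
    have := h2 i
    have h2' : (y₂ i : ℝ) = (y₃ i : ℝ)^2 + (y₄ i : ℝ)^2 + (y₅ i : ℝ)^2 + (y₆ i : ℝ)^2 := by
      have : ((y₂ i - y₃ i ^ 2 - y₄ i ^ 2 - y₅ i ^ 2 - y₆ i ^ 2 : k) : ℝ) = 0 := by
        rw [this]; simp
      push_cast at this
      linarith
    rw [h2']
    positivity
  by_contra hfin
  rw [Set.not_infinite] at hfin
  obtain ⟨N, hN⟩ := hfin.bddAbove
  -- for i > N, x i ≠ 0, so y₁ i = 0, so y₂ (i+1) = y₂ i - 1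
  have hstep : ∀ i, N < i → (y₂ (i + 1) : ℝ) = (y₂ i : ℝ) - 1 := by
    intro i hi
    have hx : x i ≠ 0 := by
      intro h
      exact absurd (hN h) (not_le.mpr hi)
    have hy1 : y₁ i = 0 := by
      rcases mul_eq_zero.mp (h1 i) with h | h
      · exact absurd h hx
      · exact h
    have := h3 i
    rw [hy1] at this
    have : ((y₂ (i + 1) - y₂ i + 1 - 0 : k) : ℝ) = 0 := by rw [this]; simp
    push_cast at this
    linarith
  have key : ∀ n : ℕ, (y₂ (N + 1 + n) : ℝ) = (y₂ (N + 1) : ℝ) - n := by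
    intro n
    induction n with
    | zero => simp
    | succ m ih =>
      have := hstep (N + 1 + m) (by omega)
      have e : N + 1 + (m + 1) = (N + 1 + m) + 1 := by omega
      rw [e, this, ih]
      push_cast
      ring
  obtain ⟨n, hn⟩ := exists_nat_gt ((y₂ (N + 1) : ℝ))
  have := hnn (N + 1 + n)
  rw [key n] at this
  linarith
end

section
/- Let k ⊆ ℝ be a field and let (x_i)_{i∈ℕ} ∈ k^ℕ be a sequence with infinitely many zeroes. Then there exist sequences (y_{1,i}),…,(y_{6,i}) in k^ℕ such that x_i·y_{1,i} = 0, y_{2,i} = y_{3,i}² + y_{4,i}² + y_{5,i}² + y_{6,i}², and y_{2,i+1} = y_{2,i} − 1 + y_{1,i} for all i ∈ ℕ. -/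
/-- For a subfield `k` of `ℝ`, any sequence in `k^ℕ` with infinitely many zeroes
extends to a solution of the difference system
`XY₁ = 0`, `Y₂ = Y₃² + Y₄² + Y₅² + Y₆²`, `σ(Y₂) = Y₂ − 1 + Y₁`. -/
theorem stmt7 (k : Subfield ℝ) (x : ℕ → k) (hx : {i : ℕ | x i = 0}.Infinite) :
    ∃ y₁ y₂ y₃ y₄ y₅ y₆ : ℕ → k,
      (∀ i, x i * y₁ i = 0) ∧
      (∀ i, y₂ i = y₃ i ^ 2 + y₄ i ^ 2 + y₅ i ^ 2 + y₆ i ^ 2) ∧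
      (∀ i, y₂ (i + 1) = y₂ i - 1 + y₁ i) := by
  have hex : ∀ i : ℕ, ∃ j, i ≤ j ∧ x j = 0 := by
    intro i
    obtain ⟨j, hj, hji⟩ := hx.exists_gt i
    exact ⟨j, hji.le, hj⟩
  set n : ℕ → ℕ := fun i => Nat.find (hex i) with hn
  have hspec : ∀ i, i ≤ n i ∧ x (n i) = 0 := fun i => Nat.find_spec (hex i)
  have hstep : ∀ i, i < n i → n (i + 1) = n i := by
    intro i hi
    have h1 : n (i + 1) ≤ n i := Nat.find_le ⟨hi, (hspec i).2⟩
    have h2 : n i ≤ n (i + 1) :=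
      Nat.find_min' (hex i) ⟨le_trans (Nat.le_succ i) (hspec (i + 1)).1, (hspec (i + 1)).2⟩
    omega
  set d : ℕ → ℕ := fun i => n i - i with hd
  set y₂ : ℕ → k := fun i => (d i : k) with hy₂
  set y₁ : ℕ → k := fun i => y₂ (i + 1) - y₂ i + 1 with hy₁
  choose a b c e habcd using fun i => Nat.sum_four_squares (d i)
  refine ⟨y₁, y₂, fun i => (a i : k), fun i => (b i : k), fun i => (c i : k),
    fun i => (e i : k), ?_, ?_, fun i => by simp [hy₁]⟩
  · intro i
    by_cases hxi : x i = 0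
    · simp [hxi]
    · have hi : i < n i := by
        rcases lt_or_eq_of_le (hspec i).1 with h | h
        · exact h
        · exact absurd ((h ▸ (hspec i).2 : x i = 0)) hxi
      have hni : n (i + 1) = n i := hstep i hi
      have hd1 : d (i + 1) = d i - 1 := by simp only [hd, hni]; omega
      have hge : 1 ≤ d i := by simp only [hd]; omega
      have : y₁ i = 0 := by
        simp only [hy₁, hy₂, hd1, Nat.cast_sub hge, Nat.cast_one]
        ring
      simp [this]
  · intro i
    have := habcd i
    simp only [hy₂]
    push_cast [← this]
    ring
end

section
/- The set of polynomials in ℤ[x] obtainable from the constant polynomial 1 by a finite sequence of the three operations P ↦ xP, P ↦ −xP, and P ↦ P + 1 is exactly the set of nonzero polynomials in ℤ[x] whose constant coefficient is nonnegative. -/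
/-- Polynomials obtainable from `1` by the operations `P ↦ xP`, `P ↦ −xP`, `P ↦ P + 1`. -/
inductive Obtainable : Polynomial ℤ → Prop
  | one : Obtainable 1
  | mulX {P : Polynomial ℤ} : Obtainable P → Obtainable (Polynomial.X * P)
  | negMulX {P : Polynomial ℤ} : Obtainable P → Obtainable (-(Polynomial.X * P))
  | addOne {P : Polynomial ℤ} : Obtainable P → Obtainable (P + 1)

private theorem key (P : Polynomial ℤ) (hP : P ≠ 0) (h0 : 0 ≤ P.coeff 0) : Obtainable P := by
  rcases lt_or_eq_of_le h0 with hpos | hzero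
  · by_cases h1 : P = 1
    · subst h1; exact Obtainable.one
    · have hP1 : P - 1 ≠ 0 := fun h => h1 (by rwa [sub_eq_zero] at h)
      have h0' : 0 ≤ (P - 1).coeff 0 := by
        simp only [Polynomial.coeff_sub, Polynomial.coeff_one]; omega
      have hd : (P - 1).natDegree ≤ P.natDegree := by
        have := Polynomial.natDegree_sub_le P (1 : Polynomial ℤ)
        simpa using this
      have hc : (P - 1).coeff 0 = P.coeff 0 - 1 := by simp
      have htn : ((P - 1).coeff 0).toNat < (P.coeff 0).toNat := by
        rw [hc]; omega
      have hrec := key (P - 1) hP1 h0'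
      simpa using Obtainable.addOne hrec
  · have hPQ : P = Polynomial.X * P.divX := by
      have h := Polynomial.X_mul_divX_add P
      rw [← hzero] at h
      simpa using h.symm
    have hQ0 : P.divX ≠ 0 := fun h => hP (by rw [hPQ, h, mul_zero])
    have hdeg : P.divX.natDegree < P.natDegree := by
      have h1 : 1 ≤ P.natDegree := by
        by_contra h
        push_neg at h
        interval_cases hn : P.natDegree
        · exact hP (by rw [Polynomial.eq_C_of_natDegree_eq_zero hn, ← hzero, map_zero])
      rw [Polynomial.natDegree_divX_eq_natDegree_tsub_one]
      omega
    rcases le_or_gt 0 (P.divX.coeff 0) with hq | hq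
    · have hrec := key P.divX hQ0 hq
      rw [hPQ]; exact Obtainable.mulX hrec
    · have hrec := key (-P.divX) (neg_ne_zero.mpr hQ0)
        (by simp only [Polynomial.coeff_neg]; omega)
      have h2 := Obtainable.negMulX hrec
      rw [hPQ]
      simpa using h2
termination_by (P.natDegree, (P.coeff 0).toNat)
decreasing_by
  · rcases lt_or_eq_of_le hd with h | h
    · exact Prod.Lex.left _ _ h
    · rw [h]; exact Prod.Lex.right _ htn
  · exact Prod.Lex.left _ _ hdeg
  · exact Prod.Lex.left _ _ (by simpa using hdeg)

/-- The obtainable polynomials are exactly the nonzero integer polynomials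
with nonnegative constant coefficient. -/
theorem stmt12 (P : Polynomial ℤ) :
    Obtainable P ↔ P ≠ 0 ∧ 0 ≤ P.coeff 0 := by

  constructor
  · intro h
    induction h with
    | one => simp
    | mulX h ih =>
      refine ⟨mul_ne_zero Polynomial.X_ne_zero ih.1, ?_⟩
      simp [Polynomial.coeff_X_mul]  -- coeff 0 of X*P ?
    | negMulX h ih =>
      refine ⟨by simpa using mul_ne_zero Polynomial.X_ne_zero ih.1, ?_⟩
      simp [Polynomial.coeff_X_mul]
    | addOne h ih =>
      rename_i Q
      have hco : ∀ Q : Polynomial ℤ, (Q + 1).coeff 0 = Q.coeff 0 + 1 := by intro Q; simp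
      refine ⟨fun hz => ?_, by rw [hco]; have := ih.2; omega⟩
      have := hco Q
      rw [hz] at this
      simp at this
      have := ih.2
      omega
  · rintro ⟨h1, h2⟩; exact key P h1 h2
end

section
/- Define P_∅(x) = 1 and for a tuple a = (a_m,…,a₀) ∈ {0,1,2}^{m+1} define P_a recursively by P_a = x·P_{a'} if a_m = 0, P_a = −x·P_{a'} if a_m = 1, and P_a = P_{a'} + 1 if a_m = 2, where a' = (a_{m−1},…,a₀). For N ∈ ℕ with N ≥ 1, let P_N = P_a where a is the base-3 expansion of N (leading digit nonzero), and P₀ = 1. Then for every nonzero polynomial q ∈ ℤ[x] there exists N ≥ 0 such that P_N = q or P_N = −q. -/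
/-- `Pseq (a_m :: … :: a₀ :: [])` is the polynomial `P_a` defined recursively by
`P_∅ = 1`, and `P_a = x P_{a'}`, `−x P_{a'}`, `P_{a'} + 1` according to the
leading digit being `0`, `1`, `2`. -/
noncomputable def Pseq : List ℕ → Polynomial ℤ
  | [] => 1
  | d :: a =>
    if d = 0 then Polynomial.X * Pseq a
    else if d = 1 then -(Polynomial.X * Pseq a)
    else Pseq a + 1

open Polynomial in
/-- Inner induction: descend on the absolute value of the constant coefficient,
given a "strip" hypothesis that handles zero constant coefficient. -/
lemma Pseq_inner (n : ℕ)
    (strip : ∀ q : Polynomial ℤ, q ≠ 0 → q.coeff 0 = 0 → q.natDegree ≤ n →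
      ∃ l : List ℕ, (∀ d ∈ l, d < 3) ∧ Pseq l = q) :
    ∀ m : ℕ, ∀ q : Polynomial ℤ, q ≠ 0 → 0 ≤ q.coeff 0 → q.natDegree ≤ n →
      (q.coeff 0).natAbs ≤ m →
      ∃ l : List ℕ, (∀ d ∈ l, d < 3) ∧ Pseq l = q := by
  intro m
  induction m with
  | zero =>
    intro q hq hc hd hm
    exact strip q hq (by omega) hd
  | succ m ihm =>
    intro q hq hc hd hm
    by_cases h0 : q.coeff 0 = 0
    · exact strip q hq h0 hd
    · have hc1 : 0 < q.coeff 0 := lt_of_le_of_ne hc (Ne.symm h0)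
      by_cases h1 : q = 1
      · exact ⟨[], by simp, by simp [Pseq, h1]⟩
      · have hp : q - 1 ≠ 0 := sub_ne_zero.2 h1
        have hco : (q - 1).coeff 0 = q.coeff 0 - 1 := by simp
        have hdeg : (q - 1).natDegree = q.natDegree := by
          rw [← Polynomial.C_1, Polynomial.natDegree_sub_C]
        obtain ⟨l, hl, hP⟩ := ihm (q - 1) hp (by rw [hco]; omega) (by omega)
          (by rw [hco]; omega)
        refine ⟨2 :: l, ?_, ?_⟩
        · intro d hdm
          rcases List.mem_cons.1 hdm with h | h
          · omega
          · exact hl d h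
        · simp [Pseq, hP]

open Polynomial in
lemma Pseq_key : ∀ n : ℕ, ∀ q : Polynomial ℤ, q ≠ 0 → 0 ≤ q.coeff 0 →
    q.natDegree ≤ n → ∃ l : List ℕ, (∀ d ∈ l, d < 3) ∧ Pseq l = q := by
  intro n
  induction n with
  | zero =>
    intro q hq hc hd
    refine Pseq_inner 0 ?_ (q.coeff 0).natAbs q hq hc hd le_rfl
    intro q hq h0 hd
    exact absurd (by rw [Polynomial.eq_C_of_natDegree_le_zero hd, h0, map_zero]) hq
  | succ n ih =>
    intro q hq hc hd
    refine Pseq_inner (n + 1) ?_ (q.coeff 0).natAbs q hq hc hd le_rfl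
    intro q hq h0 hd
    have hx : Polynomial.X * q.divX = q := by
      have h := Polynomial.X_mul_divX_add q
      rwa [h0, map_zero, add_zero] at h
    have hq' : q.divX ≠ 0 := fun h => hq (by rw [← hx, h, mul_zero])
    have hd' : q.divX.natDegree ≤ n := by
      rw [Polynomial.natDegree_divX_eq_natDegree_tsub_one]; omega
    by_cases hc' : 0 ≤ q.divX.coeff 0
    · obtain ⟨l, hl, hP⟩ := ih q.divX hq' hc' hd'
      refine ⟨0 :: l, ?_, ?_⟩
      · intro d hdm
        rcases List.mem_cons.1 hdm with h | h
        · omega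
        · exact hl d h
      · simp [Pseq, hP, hx]
    · obtain ⟨l, hl, hP⟩ := ih (-q.divX) (neg_ne_zero.2 hq')
        (by rw [Polynomial.coeff_neg]; omega) (by simpa using hd')
      refine ⟨1 :: l, ?_, ?_⟩
      · intro d hdm
        rcases List.mem_cons.1 hdm with h | h
        · omega
        · exact hl d h
      · simp [Pseq, hP, hx]

/-- Every nonzero integer polynomial `q` equals `±P_N` for some `N`, where `P_N`
is indexed by the base-3 expansion of `N` (most significant digit first). -/
theorem stmt13 (q : Polynomial ℤ) (hq : q ≠ 0) :
    ∃ N : ℕ, Pseq ((Nat.digits 3 N).reverse) = q ∨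
      Pseq ((Nat.digits 3 N).reverse) = -q := by
  obtain ⟨r, hr0, hrc, hrq⟩ : ∃ r : Polynomial ℤ, r ≠ 0 ∧ 0 ≤ r.coeff 0 ∧
      (r = q ∨ r = -q) := by
    by_cases h : 0 ≤ q.coeff 0
    · exact ⟨q, hq, h, Or.inl rfl⟩
    · exact ⟨-q, neg_ne_zero.2 hq, by simp; omega, Or.inr rfl⟩
  obtain ⟨l, hl, hP⟩ := Pseq_key r.natDegree r hr0 hrc le_rfl
  obtain ⟨l₂, hl₂, hh, hP₂⟩ : ∃ l₂ : List ℕ, (∀ d ∈ l₂, d < 3) ∧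
      (∀ h : l₂ ≠ [], l₂.head h ≠ 0) ∧ (Pseq l₂ = r ∨ Pseq l₂ = -r) := by
    match l, hl, hP with
    | [], hl, hP => exact ⟨[], by simp, by simp, Or.inl hP⟩
    | 0 :: t, hl, hP =>
      refine ⟨1 :: t, ?_, by simp, Or.inr ?_⟩
      · intro d hdm
        rcases List.mem_cons.1 hdm with h | h
        · omega
        · exact hl d (List.mem_cons.2 (Or.inr h))
      · rw [← hP]; simp [Pseq]
    | (d + 1) :: t, hl, hP =>
      exact ⟨(d + 1) :: t, hl, by simp, Or.inl hP⟩
  refine ⟨Nat.ofDigits 3 l₂.reverse, ?_⟩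
  have hdig : Nat.digits 3 (Nat.ofDigits 3 l₂.reverse) = l₂.reverse := by
    refine Nat.digits_ofDigits 3 (by norm_num) _ (fun d hd => hl₂ d (List.mem_reverse.1 hd)) ?_
    intro h
    rw [List.getLast_reverse]
    exact hh (by simpa using h)
  rw [hdig, List.reverse_reverse]
  rcases hP₂ with h | h <;> rcases hrq with h' | h' <;> subst h' <;>
    simp [h]
end

section
/- Let K be a field of characteristic zero, c ∈ K, and define the orbit x₀ = (c,0,0,0,1), x_{i+1} = p(x_i) under the explicit piecewise polynomial map p of the counterexample construction. Then every entry of the sequence (x_{5,i})_{i∈ℕ} is either equal to 1 or equal to P_a(c) for some tuple a ∈ {0,1,2}^{m+1}, and for every N ≥ 1 the value P_N(c) occurs in the sequence (x_{5,i})_{i∈ℕ}. -/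
open Classical in
/-- The piecewise polynomial map `p = (C,N,R,A,P)` of the counterexample
construction, with `Q(t) = t(t−1)(t−2)`. -/
noncomputable def cmap {K : Type*} [Field K] (v : K × K × K × K × K) :
    K × K × K × K × K :=
  let x1 := v.1; let x2 := v.2.1; let x3 := v.2.2.1; let x4 := v.2.2.2.1
  let x5 := v.2.2.2.2
  let Q : K → K := fun t => t * (t - 1) * (t - 2)
  ( x1,
    if x3 = 0 then x2 + 1 else x2,
    if x3 = 0 then x2 + 1 else if Q (x3 - 3 * x4) ≠ 0 then x3 else x4,
    if x3 = 0 then 0 else if Q (x3 - 3 * x4) ≠ 0 then x4 + 1 else 0,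
    if x3 = 0 then 1
    else if Q (x3 - 3 * x4) ≠ 0 then x5
    else if x3 - 3 * x4 = 0 then x5 * x1
    else if x3 - 3 * x4 = 1 then -(x5 * x1)
    else x5 + 1 )

/-- Integer model of the dynamics: state `(n, m, k, L)`. -/
def mstep : ℕ × ℕ × ℕ × List ℕ → ℕ × ℕ × ℕ × List ℕ :=
  fun s =>
    if s.2.1 = 0 then (s.1 + 1, s.1 + 1, 0, [])
    else if 3 * s.2.2.1 + 3 ≤ s.2.1 then (s.1, s.2.1, s.2.2.1 + 1, s.2.2.2)
    else (s.1, s.2.2.1, 0, (s.2.1 - 3 * s.2.2.1) :: s.2.2.2)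

def morbit : ℕ → ℕ × ℕ × ℕ × List ℕ
  | 0 => (0, 0, 0, [])
  | i + 1 => mstep (morbit i)

def MInv (s : ℕ × ℕ × ℕ × List ℕ) : Prop :=
  3 * s.2.2.1 ≤ s.2.1 ∧ (∀ d ∈ s.2.2.2, d ≤ 2) ∧
    (Nat.digits 3 s.2.1).reverse ++ s.2.2.2 = (Nat.digits 3 s.1).reverse

lemma inv_mstep (s : ℕ × ℕ × ℕ × List ℕ) (h : MInv s) : MInv (mstep s) := by
  obtain ⟨n, m, k, L⟩ := s
  obtain ⟨h1, h2, h3⟩ := h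
  simp only [MInv, mstep] at *
  split_ifs with hm hk
  all_goals dsimp only
  · subst hm; refine ⟨by omega, by simp, by simp⟩
  · exact ⟨by omega, h2, h3⟩
  · refine ⟨by omega, ?_, ?_⟩
    · intro d hd
      rcases List.mem_cons.1 hd with h | h
      · omega
      · exact h2 d h
    · have hdig : Nat.digits 3 m = (m - 3 * k) :: Nat.digits 3 k := by
        rw [Nat.digits_def' (by norm_num) (Nat.pos_of_ne_zero hm)]
        have e1 : m % 3 = m - 3 * k := by omega
        have e2 : m / 3 = k := by omega
        rw [e1, e2]
      rw [← h3, hdig]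
      simp

lemma inv_morbit : ∀ i, MInv (morbit i) := by
  intro i
  induction i with
  | zero => exact ⟨by simp [morbit], by simp [morbit], by simp [morbit]⟩
  | succ i ih => exact inv_mstep _ ih

lemma reach_div : ∀ t k i n m L, m ≠ 0 → 3 * k ≤ m → m / 3 - k = t →
    morbit i = (n, m, k, L) →
    ∃ j, morbit j = (n, m / 3, 0, (m % 3) :: L) := by
  intro t
  induction t with
  | zero =>
    intro k i n m L hm hk ht hi
    refine ⟨i + 1, ?_⟩
    have : morbit (i + 1) = mstep (morbit i) := rfl
    rw [this, hi]
    simp only [mstep]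
    rw [if_neg hm, if_neg (by omega)]
    have e2 : k = m / 3 := by omega
    have e1 : m - 3 * k = m % 3 := by omega
    rw [e1, e2]
  | succ t ih =>
    intro k i n m L hm hk ht hi
    have hk3 : 3 * k + 3 ≤ m := by omega
    have hstep : morbit (i + 1) = (n, m, k + 1, L) := by
      have : morbit (i + 1) = mstep (morbit i) := rfl
      rw [this, hi]
      simp only [mstep]
      rw [if_neg hm, if_pos hk3]
    exact ih (k + 1) (i + 1) n m L hm (by omega) (by omega) hstep

lemma reach_zero : ∀ m, ∀ i n L, morbit i = (n, m, 0, L) →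
    ∃ j L', morbit j = (n, 0, 0, L') := by
  intro m
  induction m using Nat.strong_induction_on with
  | _ m ih =>
    intro i n L hi
    rcases Nat.eq_zero_or_pos m with hm | hm
    · exact ⟨i, L, hm ▸ hi⟩
    · obtain ⟨j, hj⟩ := reach_div (m / 3) 0 i n m L (by omega) (by omega) (by omega) hi
      exact ih (m / 3) (by omega) j n _ hj

lemma reach_all (N : ℕ) : ∃ i L, morbit i = (N, 0, 0, L) := by
  induction N with
  | zero => exact ⟨0, [], rfl⟩
  | succ N ih =>
    obtain ⟨i, L, hi⟩ := ih
    have hstep : morbit (i + 1) = (N + 1, N + 1, 0, []) := by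
      have : morbit (i + 1) = mstep (morbit i) := rfl
      rw [this, hi]
      simp [mstep]
    obtain ⟨j, L', hj⟩ := reach_zero (N + 1) (i + 1) (N + 1) [] hstep
    exact ⟨j, L', hj⟩

lemma corr (K : Type*) [Field K] [CharZero K] (c : K)
    (x : ℕ → K × K × K × K × K)
    (h0 : x 0 = (c, 0, 0, 0, 1))
    (hstep : ∀ i, x (i + 1) = cmap (x i)) :
    ∀ i, x i = (c, ((morbit i).1 : K), ((morbit i).2.1 : K), ((morbit i).2.2.1 : K),
      Polynomial.aeval c (Pseq (morbit i).2.2.2)) := by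
  intro i
  induction i with
  | zero => rw [h0]; simp [morbit, Pseq]
  | succ i ih =>
    have hinv := inv_morbit i
    have hmor : morbit (i + 1) = mstep (morbit i) := rfl
    rw [hstep i, ih, hmor]
    rcases hmi : morbit i with ⟨n, m, k, L⟩
    rw [hmi] at hinv
    obtain ⟨hk3, hL, hdig⟩ := hinv
    simp only at hk3 hL hdig
    have hsub : ((m - 3 * k : ℕ) : K) = (m : K) - 3 * (k : K) := by
      push_cast [Nat.cast_sub hk3]
      ring
    rcases Nat.eq_zero_or_pos m with hm | hm
    · subst hm
      simp [cmap, mstep, Pseq]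
    · have hm' : m ≠ 0 := by omega
      have hmK : ((m : K)) ≠ 0 := Nat.cast_ne_zero.mpr hm'
      by_cases h3 : 3 * k + 3 ≤ m
      · -- increment case
        have hQ : ((m : K) - 3 * k) * (((m : K) - 3 * k) - 1) * (((m : K) - 3 * k) - 2) ≠ 0 := by
          rw [← hsub]
          have f1 : ((m - 3 * k : ℕ) : K) ≠ 0 := Nat.cast_ne_zero.mpr (by omega)
          have f2 : ((m - 3 * k : ℕ) : K) ≠ 1 := by
            exact_mod_cast (Nat.cast_injective.ne (by omega : (m - 3*k : ℕ) ≠ 1))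
          have f3 : ((m - 3 * k : ℕ) : K) ≠ 2 := by
            exact_mod_cast (Nat.cast_injective.ne (by omega : (m - 3*k : ℕ) ≠ 2))
          exact mul_ne_zero (mul_ne_zero f1 (sub_ne_zero_of_ne f2)) (sub_ne_zero_of_ne f3)
        simp only [cmap, mstep]
        rw [if_neg hm', if_pos h3]
        simp only [if_neg hmK, if_pos hQ]
        push_cast
        rfl
      · -- digit case
        have hQ0 : ¬ (((m : K) - 3 * k) * (((m : K) - 3 * k) - 1) * (((m : K) - 3 * k) - 2) ≠ 0) := by
          rw [not_not, ← hsub]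
          have he : m - 3 * k = 0 ∨ m - 3 * k = 1 ∨ m - 3 * k = 2 := by omega
          rcases he with he | he | he <;> rw [he] <;> push_cast <;> ring
        simp only [cmap, mstep]
        rw [if_neg hm', if_neg h3]
        simp only [if_neg hmK, if_neg hQ0]
        have he : m - 3 * k = 0 ∨ m - 3 * k = 1 ∨ m - 3 * k = 2 := by omega
        rcases he with he | he | he
        · have hv : (m : K) - 3 * k = 0 := by rw [← hsub, he]; simp
          rw [if_pos hv, he]
          simp [Pseq, mul_comm]
        · have hv : (m : K) - 3 * k = 1 := by rw [← hsub, he]; simp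
          have hv0 : ((m : K) - 3 * k) ≠ 0 := by rw [hv]; norm_num
          rw [if_neg hv0, if_pos hv, he]
          simp [Pseq, mul_comm]
        · have hv : (m : K) - 3 * k = 2 := by rw [← hsub, he]; norm_num
          have hv0 : ((m : K) - 3 * k) ≠ 0 := by rw [hv]; norm_num
          have hv1 : ((m : K) - 3 * k) ≠ 1 := by rw [hv]; norm_num
          rw [if_neg hv0, if_neg hv1, he]
          simp [Pseq]

/-- Along the orbit of `(c,0,0,0,1)` under `p`, every fifth coordinate is either `1`
or `P_a(c)` for some ternary string `a`, and for every `N ≥ 1` the value `P_N(c)`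
(indexed by the base-3 expansion of `N`) eventually occurs. -/
theorem stmt15 (K : Type*) [Field K] [CharZero K] (c : K)
    (x : ℕ → K × K × K × K × K)
    (h0 : x 0 = (c, 0, 0, 0, 1))
    (hstep : ∀ i, x (i + 1) = cmap (x i)) :
    (∀ i, (x i).2.2.2.2 = 1 ∨ ∃ a : List ℕ, a ≠ [] ∧ (∀ d ∈ a, d ≤ 2) ∧
        (x i).2.2.2.2 = Polynomial.aeval c (Pseq a)) ∧
    (∀ N : ℕ, 1 ≤ N →
      ∃ i, (x i).2.2.2.2 = Polynomial.aeval c (Pseq ((Nat.digits 3 N).reverse))) := by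
  have hc := corr K c x h0 hstep
  constructor
  · intro i
    have h5 : (x i).2.2.2.2 = Polynomial.aeval c (Pseq (morbit i).2.2.2) := by
      rw [hc i]
    rcases hL : (morbit i).2.2.2 with _ | ⟨d, L⟩
    · left; rw [h5, hL]; simp [Pseq]
    · right
      refine ⟨d :: L, by simp, ?_, by rw [h5, hL]⟩
      intro d' hd'
      exact (inv_morbit i).2.1 d' (by rw [hL]; exact hd')
  · intro N _
    obtain ⟨i, L, hi⟩ := reach_all N
    have hinv := (inv_morbit i).2.2
    rw [hi] at hinv
    simp only [Nat.digits_zero, List.reverse_nil, List.nil_append] at hinv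
    refine ⟨i, ?_⟩
    rw [hc i, hi]
    simp only
    rw [hinv]
end

section
/- Let k be a field of characteristic zero and let F ⊂ k[σ^m(X), σ^m(Y) : m ∈ ℤ²] be the domino-encoding system: F = {(X−1)(X−2)⋯(X−N), (Y−1)(Y−2)⋯(Y−N), ∏_{k=1}^n ((D_k(b) − X)² + (D_k(t) − σ^{(0,1)}(X))² + (D_k(l) − Y)² + (D_k(r) − σ^{(1,0)}(Y))²)} for a finite set of dominoes D₁,…,D_n with edge labels in {1,…,N}. Then the solutions of F = 0 in k^{ℤ²} are in bijection with the tilings of the plane ℤ² by the dominoes D₁,…,D_n. -/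
private lemma four_sq_aux {k : Type*} [Field k] [CharZero k] (a b c d : ℤ)
    (h : (a : k) ^ 2 + (b : k) ^ 2 + (c : k) ^ 2 + (d : k) ^ 2 = 0) :
    a = 0 ∧ b = 0 ∧ c = 0 ∧ d = 0 := by
  have h3 : a ^ 2 + b ^ 2 + c ^ 2 + d ^ 2 = 0 := by
    have h2 : ((a ^ 2 + b ^ 2 + c ^ 2 + d ^ 2 : ℤ) : k) = 0 := by
      push_cast; linear_combination h
    exact_mod_cast h2
  refine ⟨?_, ?_, ?_, ?_⟩ <;>
    nlinarith [sq_nonneg a, sq_nonneg b, sq_nonneg c, sq_nonneg d]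

/-- The domino-encoding system: for dominoes `D₁,…,D_n` with edge labels in
`{1,…,N}`, solutions of the system `F = 0` in `k^{ℤ²}` are in bijection with
tilings of the plane by the dominoes. Part 1: every tiling gives a solution;
Part 2: every solution comes from a unique tiling. -/
theorem stmt18 (k : Type*) [Field k] [CharZero k] (N nd : ℕ)
    (Dl Dr Dt Db : Fin nd → ℕ)
    (hD : ∀ t : Fin nd,
      (1 ≤ Dl t ∧ Dl t ≤ N) ∧ (1 ≤ Dr t ∧ Dr t ≤ N) ∧
      (1 ≤ Dt t ∧ Dt t ≤ N) ∧ (1 ≤ Db t ∧ Db t ≤ N)) :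
    (∀ xl yl : ℤ × ℤ → ℕ,
      ((∀ v, (1 ≤ xl v ∧ xl v ≤ N) ∧ (1 ≤ yl v ∧ yl v ≤ N)) ∧
        (∀ i j : ℤ, ∃ t : Fin nd, Db t = xl (i, j) ∧ Dt t = xl (i, j + 1) ∧
          Dl t = yl (i, j) ∧ Dr t = yl (i + 1, j))) →
      ((∀ v : ℤ × ℤ, ∏ c ∈ Finset.Icc 1 N, ((xl v : k) - (c : k)) = 0) ∧
        (∀ v : ℤ × ℤ, ∏ c ∈ Finset.Icc 1 N, ((yl v : k) - (c : k)) = 0) ∧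
        (∀ i j : ℤ, ∏ t : Fin nd,
          (((Db t : k) - (xl (i, j) : k)) ^ 2 + ((Dt t : k) - (xl (i, j + 1) : k)) ^ 2 +
            ((Dl t : k) - (yl (i, j) : k)) ^ 2 + ((Dr t : k) - (yl (i + 1, j) : k)) ^ 2) = 0))) ∧
    (∀ X Y : ℤ × ℤ → k,
      ((∀ v : ℤ × ℤ, ∏ c ∈ Finset.Icc 1 N, (X v - (c : k)) = 0) ∧
        (∀ v : ℤ × ℤ, ∏ c ∈ Finset.Icc 1 N, (Y v - (c : k)) = 0) ∧
        (∀ i j : ℤ, ∏ t : Fin nd,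
          (((Db t : k) - X (i, j)) ^ 2 + ((Dt t : k) - X (i, j + 1)) ^ 2 +
            ((Dl t : k) - Y (i, j)) ^ 2 + ((Dr t : k) - Y (i + 1, j)) ^ 2) = 0)) →
      ∃! w : (ℤ × ℤ → ℕ) × (ℤ × ℤ → ℕ),
        ((∀ v, (1 ≤ w.1 v ∧ w.1 v ≤ N) ∧ (1 ≤ w.2 v ∧ w.2 v ≤ N)) ∧
          (∀ i j : ℤ, ∃ t : Fin nd, Db t = w.1 (i, j) ∧ Dt t = w.1 (i, j + 1) ∧
            Dl t = w.2 (i, j) ∧ Dr t = w.2 (i + 1, j))) ∧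
        (∀ v, X v = (w.1 v : k)) ∧ (∀ v, Y v = (w.2 v : k))) := by
  constructor
  · rintro xl yl ⟨hb, ht⟩
    refine ⟨?_, ?_, ?_⟩
    · intro v
      apply Finset.prod_eq_zero (i := xl v)
      · exact Finset.mem_Icc.mpr ⟨(hb v).1.1, (hb v).1.2⟩
      · simp
    · intro v
      apply Finset.prod_eq_zero (i := yl v)
      · exact Finset.mem_Icc.mpr ⟨(hb v).2.1, (hb v).2.2⟩
      · simp
    · intro i j
      obtain ⟨t, h1, h2, h3, h4⟩ := ht i j
      apply Finset.prod_eq_zero (Finset.mem_univ t)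
      rw [h1, h2, h3, h4]; ring
  · rintro X Y ⟨hX, hY, hP⟩
    have hx : ∀ v, ∃ c : ℕ, (1 ≤ c ∧ c ≤ N) ∧ X v = (c : k) := by
      intro v
      obtain ⟨c, hc, hc0⟩ := Finset.prod_eq_zero_iff.mp (hX v)
      exact ⟨c, Finset.mem_Icc.mp hc, sub_eq_zero.mp hc0⟩
    have hy : ∀ v, ∃ c : ℕ, (1 ≤ c ∧ c ≤ N) ∧ Y v = (c : k) := by
      intro v
      obtain ⟨c, hc, hc0⟩ := Finset.prod_eq_zero_iff.mp (hY v)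
      exact ⟨c, Finset.mem_Icc.mp hc, sub_eq_zero.mp hc0⟩
    choose xl hxb hxe using hx
    choose yl hyb hye using hy
    refine ⟨⟨xl, yl⟩, ⟨⟨fun v => ⟨hxb v, hyb v⟩, ?_⟩, hxe, hye⟩, ?_⟩
    · intro i j
      obtain ⟨t, -, h0⟩ := Finset.prod_eq_zero_iff.mp (hP i j)
      have h0' : (((Db t : ℤ) - xl (i, j) : ℤ) : k) ^ 2 +
          (((Dt t : ℤ) - xl (i, j + 1) : ℤ) : k) ^ 2 +
          (((Dl t : ℤ) - yl (i, j) : ℤ) : k) ^ 2 +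
          (((Dr t : ℤ) - yl (i + 1, j) : ℤ) : k) ^ 2 = 0 := by
        rw [hxe (i, j), hxe (i, j + 1), hye (i, j), hye (i + 1, j)] at h0
        push_cast
        push_cast at h0
        linear_combination h0
      obtain ⟨e1, e2, e3, e4⟩ := four_sq_aux _ _ _ _ h0'
      refine ⟨t, ?_, ?_, ?_, ?_⟩
      · exact_mod_cast sub_eq_zero.mp e1
      · exact_mod_cast sub_eq_zero.mp e2
      · exact_mod_cast sub_eq_zero.mp e3
      · exact_mod_cast sub_eq_zero.mp e4
    · rintro ⟨w1, w2⟩ ⟨-, hwX, hwY⟩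
      have e1 : w1 = xl := funext fun v =>
        Nat.cast_injective (R := k) (by rw [← hwX v, hxe v])
      have e2 : w2 = yl := funext fun v =>
        Nat.cast_injective (R := k) (by rw [← hwY v, hye v])
      simp [e1, e2]
end

section
/- Let (x_i)_{i∈ℕ} be a solution in K^ℕ (K a field) of f₁ = ⋯ = f_ℓ = 0 with g(x) ≠ 0, where g ∈ k₀[X] depends only on the zeroth shift and f₁,…,f_ℓ ∈ k₀[X, σ(X)] depend only on the zeroth and first shifts (X a tuple of n variables). Define for each word w in the free monoid M₂ = {a,b}* the quantity A(w) = the largest i such that w ends with a^i, and set y_w = x_{A(w)}, z_w = g(x₀)^{-1}, assuming g(x₀) ≠ 0. Then (y, z) ∈ (K^{M₂})^{n+1} is a solution of the M₂-system {f̃₁,…,f̃_ℓ, Z·σ^b(g̃) − 1} = 0, where f̃_i and g̃ are obtained by replacing σ with σ^a. -/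
/-- `trailA w` is the largest `i` such that the word `w` ends with `a^i`,
where the generator `a` of the free monoid `{a,b}*` is encoded as `true`. -/
def trailA (w : List Bool) : ℕ := (w.reverse.takeWhile (fun c => c)).length

@[simp]
theorem trailA_append_true (w : List Bool) : trailA (w ++ [true]) = trailA w + 1 := by
  simp [trailA]

@[simp]
theorem trailA_append_false (w : List Bool) : trailA (w ++ [false]) = 0 := by
  simp [trailA]

/-- Reduction from difference systems in `K^ℕ` to systems over the free monoid
`M₂ = {a,b}*`: from a solution `(xᵢ)` of `f₁ = ⋯ = f_ℓ = 0` (encoded by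
polynomials `P t` in `(X, σ(X))`) with `g(x₀) ≠ 0` (encoded by `Q`), the
`M₂`-sequences `y_w = x_{A(w)}`, `z_w = g(x₀)⁻¹` solve the `M₂`-system
`{f̃₁, …, f̃_ℓ, Z·σ^b(g̃) − 1}`, where `σ^a` appends `a` and `σ^b` appends `b`. -/
theorem stmt19 (K : Type*) [Field K] (n L : ℕ)
    (P : Fin L → MvPolynomial (Fin n ⊕ Fin n) K)
    (Q : MvPolynomial (Fin n) K)
    (x : ℕ → Fin n → K)
    (hsol : ∀ (t : Fin L) (i : ℕ),
      MvPolynomial.eval (Sum.elim (x i) (x (i + 1))) (P t) = 0)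
    (hg : MvPolynomial.eval (x 0) Q ≠ 0)
    (y : List Bool → Fin n → K) (z : List Bool → K)
    (hy : ∀ w, y w = x (trailA w))
    (hz : ∀ w, z w = (MvPolynomial.eval (x 0) Q)⁻¹) :
    (∀ (t : Fin L) (w : List Bool),
      MvPolynomial.eval (Sum.elim (y w) (y (w ++ [true]))) (P t) = 0) ∧
    (∀ w : List Bool, z w * MvPolynomial.eval (y (w ++ [false])) Q - 1 = 0) := by
  constructor
  · intro t w
    rw [hy, hy, trailA_append_true]
    exact hsol t (trailA w)
  · intro w
    rw [hz, hy, trailA_append_false, inv_mul_cancel₀ hg, sub_self]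
end
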